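/- Let p be a prime, r ≥ 1, and let M, d be positive real numbers with d < p^{−1/(p−1)}. Let a : (Fin r → ℕ) → ℤ_p satisfy ‖a(n)‖_p ≤ M·d^{n_1+⋯+n_r} for every n = (n_1,…,n_r). Then there exists C : (Fin r → ℕ) → ℚ_p with ‖C(n)‖_p ≤ M·(d·p^{1/(p−1)})^{n_1+⋯+n_r} for every n, such that for every x = (x_1,…,x_r) ∈ ℚ_p^r with ‖x_j‖_p < d^{−1}·p^{−1/(p−1)} for all j, both families ( a(n)·∏_{j=1}^r b(x_j, n_j) )_{n ∈ ℕ^r} and ( C(n)·∏_{j=1}^r x_j^{n_j} )_{n ∈ ℕ^r} are summable in ℚ_p and have the same sum. -/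

import Mathlib

/-- The binomial polynomial `x choose m`, i.e. `(∏_{i=0}^{m−1} (x − i))/m!`. -/
noncomputable def padicBinom (p : ℕ) [Fact p.Prime] (x : ℚ_[p]) (m : ℕ) : ℚ_[p] :=
  (∏ i ∈ Finset.range m, (x - (i : ℚ_[p]))) / (Nat.factorial m : ℚ_[p])

open Polynomial Filter

variable {p : ℕ} [Fact p.Prime]

noncomputable def binCoeff (p : ℕ) [Fact p.Prime] (m k : ℕ) : ℚ_[p] :=
  ((∏ i ∈ Finset.range m, (X - C (i : ℚ_[p]))).coeff k) / (m.factorial : ℚ_[p])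

lemma natDegree_prodlin (m : ℕ) :
    (∏ i ∈ Finset.range m, (X - C (i : ℚ_[p]))).natDegree ≤ m := by
  refine (Polynomial.natDegree_prod_le _ _).trans ?_
  have : ∀ i ∈ Finset.range m, (X - C ((i : ℕ) : ℚ_[p])).natDegree ≤ 1 :=
    fun i _ => natDegree_X_sub_C_le _
  simpa using Finset.sum_le_card_nsmul _ _ 1 this

lemma binCoeff_eq_zero {m k : ℕ} (h : m < k) : binCoeff p m k = 0 := by
  unfold binCoeff
  rw [Polynomial.coeff_eq_zero_of_natDegree_lt (lt_of_le_of_lt (natDegree_prodlin m) h), zero_div]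

lemma padicBinom_eq (x : ℚ_[p]) (m : ℕ) :
    padicBinom p x m = ∑ k ∈ Finset.range (m + 1), binCoeff p m k * x ^ k := by
  have h : padicBinom p x m
      = (∏ i ∈ Finset.range m, (X - C (i : ℚ_[p]))).eval x / (m.factorial : ℚ_[p]) := by
    simp [padicBinom, eval_prod]
  rw [h, Polynomial.eval_eq_sum_range' (lt_of_le_of_lt (natDegree_prodlin m) (Nat.lt_succ_self m)),
    Finset.sum_div]
  refine Finset.sum_congr rfl fun k _ => ?_
  rw [binCoeff, div_mul_eq_mul_div]

lemma norm_coeff_le_one (m k : ℕ) :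
    ‖(∏ i ∈ Finset.range m, (X - C (i : ℚ_[p]))).coeff k‖ ≤ 1 := by
  have h : (∏ i ∈ Finset.range m, (X - C (i : ℚ_[p])))
      = ((∏ i ∈ Finset.range m, (X - C (i : ℤ_[p]))).map (PadicInt.Coe.ringHom)) := by
    rw [Polynomial.map_prod]
    refine Finset.prod_congr rfl fun i _ => ?_
    simp
  rw [h, Polynomial.coeff_map]
  exact (PadicInt.padic_norm_e_of_padicInt _).trans_le (PadicInt.norm_le_one _)

lemma norm_binCoeff_le (m k : ℕ) :
    ‖binCoeff p m k‖ ≤ ((p : ℝ) ^ ((1 : ℝ) / ((p : ℝ) - 1))) ^ m := by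
  have hp1 : (1 : ℝ) < (p : ℝ) := by exact_mod_cast (Fact.out : p.Prime).one_lt
  have hp0 : (0 : ℝ) < (p : ℝ) := by positivity
  have hfac : ((m.factorial : ℚ_[p])) ≠ 0 := by
    exact_mod_cast m.factorial_ne_zero
  set v : ℕ := padicValNat p (m.factorial) with hv
  have hnorm : ‖(m.factorial : ℚ_[p])‖ = (p : ℝ) ^ (-(v : ℤ)) := by
    rw [Padic.norm_eq_zpow_neg_valuation hfac, Padic.valuation_natCast]
  have h1 : ‖binCoeff p m k‖ ≤ (p : ℝ) ^ ((v : ℤ)) := by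
    rw [binCoeff, norm_div, hnorm]
    rw [div_le_iff₀ (by positivity)]
    calc ‖(∏ i ∈ Finset.range m, (X - C (i : ℚ_[p]))).coeff k‖ ≤ 1 := norm_coeff_le_one m k
      _ = (p:ℝ) ^ ((v:ℤ)) * (p:ℝ) ^ (-(v:ℤ)) := by
          rw [← zpow_add₀ (ne_of_gt hp0)]; simp
  refine h1.trans ?_
  have hle : ((p - 1) * v : ℕ) ≤ m := by
    rw [hv, sub_one_mul_padicValNat_factorial]
    exact Nat.sub_le _ _
  have hle' : ((p:ℝ) - 1) * (v : ℝ) ≤ (m : ℝ) := by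
    have := (Nat.cast_le (α := ℝ)).mpr hle
    push_cast [Nat.cast_sub (Fact.out : p.Prime).one_lt.le] at this
    linarith
  have hvle : (v : ℝ) ≤ (1 / ((p:ℝ) - 1)) * m := by
    rw [div_mul_eq_mul_div, le_div_iff₀ (by linarith)]
    linarith
  calc (p:ℝ) ^ ((v:ℤ)) = (p:ℝ) ^ ((v:ℝ)) := by
        rw [← Real.rpow_intCast]; norm_num
    _ ≤ (p:ℝ) ^ ((1 / ((p:ℝ) - 1)) * m) := by
        exact (Real.rpow_le_rpow_left_iff hp1).mpr hvle
    _ = ((p : ℝ) ^ ((1 : ℝ) / ((p : ℝ) - 1))) ^ m := by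
        rw [← Real.rpow_natCast ((p:ℝ) ^ ((1:ℝ)/((p:ℝ)-1))) m, ← Real.rpow_mul hp0.le]

lemma finite_sum_le (r N : ℕ) : {n : Fin r → ℕ | ∑ j, n j ≤ N}.Finite := by
  refine Set.Finite.subset (Set.Finite.pi (fun _ : Fin r => Set.finite_Iic N)) ?_
  intro n hn
  intro j _
  simp only [Set.mem_Iic]
  exact le_trans (Finset.single_le_sum (fun i _ => Nat.zero_le (n i)) (Finset.mem_univ j)) hn

lemma tendsto_sum_cofinite (r : ℕ) :
    Tendsto (fun n : Fin r → ℕ => ∑ j, n j) cofinite atTop := by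
  rw [tendsto_atTop]
  intro N
  rw [eventually_cofinite]
  refine (finite_sum_le r N).subset ?_
  intro n hn
  simp only [Set.mem_setOf_eq, not_le] at hn ⊢
  omega

lemma summable_of_decay {r : ℕ} (f : (Fin r → ℕ) → ℚ_[p]) (M u : ℝ) (hu0 : 0 ≤ u) (hu1 : u < 1)
    (hf : ∀ n, ‖f n‖ ≤ M * u ^ (∑ j, n j)) : Summable f := by
  apply NonarchimedeanAddGroup.summable_of_tendsto_cofinite_zero
  refine squeeze_zero_norm hf ?_
  have h := ((tendsto_pow_atTop_nhds_zero_of_lt_one hu0 hu1).comp (tendsto_sum_cofinite r)).const_mul M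
  simpa using h

lemma norm_tsum_le' {ι : Type*} (f : ι → ℚ_[p]) (B : ℝ) (hB : 0 ≤ B) (h : ∀ i, ‖f i‖ ≤ B) :
    ‖∑' i, f i‖ ≤ B := by
  by_cases hs : Summable f
  · refine le_of_tendsto hs.hasSum.norm ?_
    exact Eventually.of_forall fun s =>
      IsUltrametricDist.norm_sum_le_of_forall_le_of_nonneg hB (fun i _ => h i)
  · simpa [tsum_eq_zero_of_not_summable hs] using hB


/-- A multivariable Mahler-type expansion: a function given by a binomial series with
`ℤ_p`-coefficients decaying like `M·d^{|n|}` (with `d < p^{−1/(p−1)}`) admits a power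
series expansion with controlled coefficients on the polydisc of radius `d⁻¹·p^{−1/(p−1)}`. -/
theorem binomial_series_to_power_series (p : ℕ) [Fact p.Prime] (r : ℕ) (hr : 1 ≤ r)
    (M d : ℝ) (hM : 0 < M) (hd : 0 < d)
    (hdp : d < (p : ℝ) ^ (-1 / ((p : ℝ) - 1)))
    (a : (Fin r → ℕ) → ℤ_[p])
    (ha : ∀ n : Fin r → ℕ, ‖a n‖ ≤ M * d ^ (∑ j, n j)) :
    ∃ C : (Fin r → ℕ) → ℚ_[p],
      (∀ n : Fin r → ℕ,
        ‖C n‖ ≤ M * (d * (p : ℝ) ^ ((1 : ℝ) / ((p : ℝ) - 1))) ^ (∑ j, n j)) ∧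
      ∀ x : Fin r → ℚ_[p],
        (∀ j, ‖x j‖ < d⁻¹ * (p : ℝ) ^ (-1 / ((p : ℝ) - 1))) →
          ∃ S : ℚ_[p],
            HasSum (fun n : Fin r → ℕ =>
              ((a n : ℚ_[p]) * ∏ j, padicBinom p (x j) (n j))) S ∧
            HasSum (fun n : Fin r → ℕ => C n * ∏ j, (x j) ^ (n j)) S := by
  have hp1 : (1 : ℝ) < (p : ℝ) := by exact_mod_cast (Fact.out : p.Prime).one_lt
  have hp0 : (0 : ℝ) < (p : ℝ) := by positivity
  set τ : ℝ := (p : ℝ) ^ ((1 : ℝ) / ((p : ℝ) - 1)) with hτ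
  have hτ0 : 0 < τ := Real.rpow_pos_of_pos hp0 _
  set t : ℝ := d * τ with htdef
  have ht0 : 0 < t := mul_pos hd hτ0
  have hmulinv : (p : ℝ) ^ (-1 / ((p : ℝ) - 1)) * τ = 1 := by
    rw [hτ, ← Real.rpow_add hp0,
      show -1 / ((p:ℝ) - 1) + 1 / ((p:ℝ) - 1) = 0 by ring, Real.rpow_zero]
  have ht1 : t < 1 := by
    calc t < (p : ℝ) ^ (-1 / ((p : ℝ) - 1)) * τ := by
          exact mul_lt_mul_of_pos_right hdp hτ0
      _ = 1 := hmulinv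
  -- coefficients
  set g : ((Fin r → ℕ) × (Fin r → ℕ)) → ℚ_[p] :=
    fun nk => (a nk.1 : ℚ_[p]) * ∏ j, binCoeff p (nk.1 j) (nk.2 j) with hgdef
  have hg_norm : ∀ n k : Fin r → ℕ, ‖g (n, k)‖ ≤ M * t ^ (∑ j, n j) := by
    intro n k
    rw [hgdef]
    simp only
    rw [norm_mul, PadicInt.padic_norm_e_of_padicInt]
    calc ‖a n‖ * ‖∏ j, binCoeff p (n j) (k j)‖
        ≤ (M * d ^ (∑ j, n j)) * (τ ^ (∑ j, n j)) := by
          refine mul_le_mul (ha n) ?_ (norm_nonneg _) (by positivity)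
          rw [norm_prod]
          calc ∏ j, ‖binCoeff p (n j) (k j)‖ ≤ ∏ j, τ ^ (n j) := by
                refine Finset.prod_le_prod (fun j _ => norm_nonneg _)
                  (fun j _ => norm_binCoeff_le (n j) (k j))
            _ = τ ^ (∑ j, n j) := by rw [← Finset.prod_pow_eq_pow_sum]
      _ = M * t ^ (∑ j, n j) := by rw [htdef, mul_pow]; ring
  have hg_zero : ∀ n k : Fin r → ℕ, (¬ ∀ j, k j ≤ n j) → g (n, k) = 0 := by
    intro n k h
    push_neg at h
    obtain ⟨j, hj⟩ := h
    rw [hgdef]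
    simp only
    rw [Finset.prod_eq_zero (Finset.mem_univ j) (binCoeff_eq_zero hj), mul_zero]
  have hg_norm' : ∀ n k : Fin r → ℕ, ‖g (n, k)‖ ≤ M * t ^ (∑ j, k j) := by
    intro n k
    by_cases h : ∀ j, k j ≤ n j
    · refine (hg_norm n k).trans ?_
      refine mul_le_mul_of_nonneg_left ?_ hM.le
      exact pow_le_pow_of_le_one ht0.le ht1.le (Finset.sum_le_sum fun j _ => h j)
    · rw [hg_zero n k h, norm_zero]; positivity
  have hgk_summable : ∀ k : Fin r → ℕ, Summable (fun n => g (n, k)) :=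
    fun k => summable_of_decay _ M t ht0.le ht1 (fun n => hg_norm n k)
  refine ⟨fun k => ∑' n, g (n, k), fun k => norm_tsum_le' _ _ (by positivity)
    (fun n => hg_norm' n k), ?_⟩
  intro x hx
  -- per-coordinate bounds
  set B : Fin r → ℝ := fun j => max ‖x j‖ 1 with hB
  have hB1 : ∀ j, 1 ≤ B j := fun j => le_max_right _ _
  have hxB : ∀ j, ‖x j‖ ≤ B j := fun j => le_max_left _ _
  have htB : ∀ j, t * B j < 1 := by
    intro j
    rcases max_cases ‖x j‖ 1 with ⟨he, _⟩ | ⟨he, _⟩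
    · rw [hB]; simp only [he]
      calc t * ‖x j‖ < t * (d⁻¹ * (p : ℝ) ^ (-1 / ((p : ℝ) - 1))) :=
            mul_lt_mul_of_pos_left (hx j) ht0
        _ = (d * d⁻¹) * ((p : ℝ) ^ (-1 / ((p : ℝ) - 1)) * τ) := by rw [htdef]; ring
        _ = 1 := by rw [hmulinv, mul_inv_cancel₀ hd.ne', one_mul]
    · rw [hB]; simp only [he, mul_one]; exact ht1
  haveI : Nonempty (Fin r) := Fin.pos_iff_nonempty.mp hr
  set U : ℝ := Finset.univ.sup' Finset.univ_nonempty (fun j => t * B j) with hU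
  have hUj : ∀ j, t * B j ≤ U := fun j =>
    Finset.le_sup' (fun j => t * B j) (Finset.mem_univ j)
  have hU0 : 0 ≤ U :=
    le_trans (by positivity : (0:ℝ) ≤ t * B (Classical.arbitrary _)) (hUj _)
  have hU1 : U < 1 := by
    rw [hU, Finset.sup'_lt_iff]
    exact fun j _ => htB j
  set F : ((Fin r → ℕ) × (Fin r → ℕ)) → ℚ_[p] :=
    fun nk => g nk * ∏ j, (x j) ^ (nk.2 j) with hF
  have hF_zero : ∀ n k : Fin r → ℕ, (¬ ∀ j, k j ≤ n j) → F (n, k) = 0 := by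
    intro n k h
    rw [hF]; simp only
    rw [hg_zero n k h, zero_mul]
  have hF_bound : ∀ n k : Fin r → ℕ, (∀ j, k j ≤ n j) →
      ‖F (n, k)‖ ≤ M * U ^ (∑ j, n j) := by
    intro n k h
    rw [hF]; simp only
    rw [norm_mul, norm_prod]
    calc ‖g (n, k)‖ * ∏ j, ‖(x j) ^ (k j)‖
        ≤ (M * t ^ (∑ j, n j)) * ∏ j, (B j) ^ (n j) := by
          refine mul_le_mul (hg_norm n k) ?_ (by positivity) (by positivity)
          refine Finset.prod_le_prod (fun j _ => by positivity) (fun j _ => ?_)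
          rw [norm_pow]
          calc ‖x j‖ ^ (k j) ≤ (B j) ^ (k j) :=
                pow_le_pow_left₀ (norm_nonneg _) (hxB j) _
            _ ≤ (B j) ^ (n j) := pow_le_pow_right₀ (hB1 j) (h j)
      _ = M * ∏ j, (t * B j) ^ (n j) := by
          simp only [mul_pow, Finset.prod_mul_distrib, Finset.prod_pow_eq_pow_sum]
          ring
      _ ≤ M * U ^ (∑ j, n j) := by
          refine mul_le_mul_of_nonneg_left ?_ hM.le
          calc ∏ j, (t * B j) ^ (n j) ≤ ∏ j, U ^ (n j) := by
                refine Finset.prod_le_prod (fun j _ => by positivity)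
                  (fun j _ => pow_le_pow_left₀ (by positivity) (hUj j) _)
            _ = U ^ (∑ j, n j) := by rw [← Finset.prod_pow_eq_pow_sum]
  -- summability of the doubly-indexed family
  have hF_tendsto : Tendsto F cofinite (nhds 0) := by
    rw [Metric.tendsto_nhds]
    intro ε hε
    rw [eventually_cofinite]
    obtain ⟨N, hN⟩ : ∃ N : ℕ, ∀ m ≥ N, M * U ^ m < ε := by
      have h := (tendsto_pow_atTop_nhds_zero_of_lt_one hU0 hU1).const_mul M
      rw [mul_zero] at h
      exact (h.eventually (gt_mem_nhds hε)).exists_forall_of_atTop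
    refine Set.Finite.subset (((finite_sum_le r N).prod (finite_sum_le r N)).subset
      (Set.Subset.refl _)) ?_
    rintro ⟨n, k⟩ hnk
    simp only [Set.mem_setOf_eq, dist_zero_right, not_lt] at hnk
    have hkn : ∀ j, k j ≤ n j := by
      by_contra h
      rw [hF_zero n k h, norm_zero] at hnk
      exact absurd hnk (not_le.mpr hε)
    have hn : ∑ j, n j ≤ N := by
      by_contra h
      exact absurd (lt_of_le_of_lt (hnk.trans (hF_bound n k hkn)) (hN _ (le_of_not_ge h)))
        (lt_irrefl ε)
    constructor
    · exact hn
    · exact le_trans (Finset.sum_le_sum fun j _ => hkn j) hn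
  have hFsum : Summable F := NonarchimedeanAddGroup.summable_of_tendsto_cofinite_zero hF_tendsto
  refine ⟨∑' nk, F nk, ?_, ?_⟩
  · refine hFsum.hasSum.prod_fiberwise ?_
    intro n
    have hvanish : ∀ k ∉ Fintype.piFinset (fun j => Finset.range (n j + 1)), F (n, k) = 0 := by
      intro k hk
      refine hF_zero n k ?_
      intro hkn
      refine hk ?_
      rw [Fintype.mem_piFinset]
      intro j
      rw [Finset.mem_range]
      exact Nat.lt_succ_of_le (hkn j)
    have hfin := hasSum_sum_of_ne_finset_zero (L := SummationFilter.unconditional _) hvanish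
    convert hfin using 1
    -- goal: a n * ∏ padicBinom = ∑ k in piFinset, F (n, k)
    rw [hF, hgdef]
    simp only
    calc ((a n : ℚ_[p]) * ∏ j, padicBinom p (x j) (n j))
        = (a n : ℚ_[p]) * ∏ j, ∑ k ∈ Finset.range (n j + 1), binCoeff p (n j) k * (x j) ^ k := by
          rw [Finset.prod_congr rfl fun j _ => padicBinom_eq (x j) (n j)]
      _ = (a n : ℚ_[p]) * ∑ k ∈ Fintype.piFinset (fun j => Finset.range (n j + 1)),
            ∏ j, binCoeff p (n j) (k j) * (x j) ^ (k j) := by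
          rw [Finset.prod_univ_sum]
      _ = ∑ k ∈ Fintype.piFinset (fun j => Finset.range (n j + 1)),
            (a n : ℚ_[p]) * ∏ j, binCoeff p (n j) (k j) * (x j) ^ (k j) := by
          rw [Finset.mul_sum]
      _ = ∑ k ∈ Fintype.piFinset (fun j => Finset.range (n j + 1)),
            ((a n : ℚ_[p]) * ∏ j, binCoeff p (n j) (k j)) * ∏ j, (x j) ^ (k j) := by
          refine Finset.sum_congr rfl fun k _ => ?_
          rw [Finset.prod_mul_distrib, mul_assoc]
  · have hswap : HasSum (fun kn : (Fin r → ℕ) × (Fin r → ℕ) => F (kn.2, kn.1)) (∑' nk, F nk) := by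
      have := ((Equiv.prodComm (Fin r → ℕ) (Fin r → ℕ)).hasSum_iff).mpr hFsum.hasSum
      exact this
    refine hswap.prod_fiberwise ?_
    intro k
    have h1 : HasSum (fun n => g (n, k)) (∑' n, g (n, k)) := (hgk_summable k).hasSum
    have h2 := h1.mul_right (∏ j, (x j) ^ (k j))
    exact h2
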